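/- Let A = ⋃_{r≥1} {i·2^{2^r} : 1 ≤ i ≤ r} ⊆ ℕ. Then: (i) for every r ∈ ℕ, A contains the set FS(x_1,…,x_r) with x_1 = ⋯ = x_r = 2^{2^r}, so A contains an IP_r set for every r (hence ℕ \ A is not IP*_r for any r); and (ii) for every sequence (x_n)_{n≥1} of positive integers, FS(x_1,x_2,…) is not contained in A, i.e., A contains no IP set (hence ℕ \ A meets every IP set of positive integers, so it is IP*). -/

import Mathlib

open Set

/-- Finite sums set `FS(x₁,…,x_r)`. -/
def FSfin {G : Type*} [AddCommMonoid G] {r : ℕ} (x : Fin r → G) : Set G :=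
  {g | ∃ α : Finset (Fin r), α.Nonempty ∧ ∑ i ∈ α, x i = g}

/-- `A` is an IP_r set: it contains `FS(x₁,…,x_r)` for some `x₁,…,x_r`. -/
def IsIPr {G : Type*} [AddCommMonoid G] (r : ℕ) (A : Set G) : Prop :=
  ∃ x : Fin r → G, FSfin x ⊆ A

/-- `A` is an IP*_r set: it meets every IP_r set. -/
def IsIPrStar {G : Type*} [AddCommMonoid G] (r : ℕ) (A : Set G) : Prop :=
  ∀ B : Set G, IsIPr r B → (A ∩ B).Nonempty

/-- Infinite finite-sums set `FS(x₁,x₂,…)`. -/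
def FSinf {G : Type*} [AddCommMonoid G] (x : ℕ → G) : Set G :=
  {g | ∃ α : Finset ℕ, α.Nonempty ∧ ∑ n ∈ α, x n = g}

/-- For `A = ⋃_{r ≥ 1} {i·2^{2^r} : 1 ≤ i ≤ r}`:
(i) `A` contains `FS(x₁,…,x_r)` with all `xᵢ = 2^{2^r}` for every `r` (so `ℕ \ A` is not
IP*_r for any `r ≥ 1`), while (ii) `A` contains no infinite IP set of positive integers
(so `ℕ \ A` meets every IP set of positive integers, i.e. it is IP*). -/
def ASet : Set ℕ := {m : ℕ | ∃ r i : ℕ, 1 ≤ r ∧ 1 ≤ i ∧ i ≤ r ∧ m = i * 2 ^ (2 ^ r)}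

lemma mono_bound {r' r : ℕ} (h : r' ≤ r) : r' * 2 ^ (2 ^ r') ≤ r * 2 ^ (2 ^ r) :=
  Nat.mul_le_mul h (Nat.pow_le_pow_right (by norm_num) (Nat.pow_le_pow_right (by norm_num) h))

lemma part1 (r : ℕ) : FSfin (fun _ : Fin r => 2 ^ (2 ^ r)) ⊆ ASet := by
  rintro m ⟨α, hα, hsum⟩
  obtain ⟨i0, -⟩ := id hα
  refine ⟨r, α.card, i0.pos, Finset.card_pos.mpr hα, by simpa using Finset.card_le_univ α, ?_⟩
  rw [← hsum, Finset.sum_const, smul_eq_mul]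

lemma part3 (x : ℕ → ℕ) (hx : ∀ n, 0 < x n) (h : FSinf x ⊆ ASet) : False := by
  obtain ⟨r, i, hr, hi, hir, hx0⟩ :=
    h (show x 0 ∈ FSinf x from ⟨{0}, Finset.singleton_nonempty 0, by simp⟩)
  set M := r * 2 ^ (2 ^ r) + 1 with hM
  set α : Finset ℕ := Finset.Icc 1 M with hα
  have h0α : 0 ∉ α := by simp [hα]
  have hαne : α.Nonempty := ⟨1, by simp [hα, hM]⟩
  set y := ∑ n ∈ α, x n with hy
  have hylarge : r * 2 ^ (2 ^ r) < y := by
    have h1 : M = ∑ n ∈ α, 1 := by simp [hα, Nat.card_Icc]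
    have h2 : M ≤ y := h1 ▸ Finset.sum_le_sum fun n _ => hx n
    omega
  obtain ⟨r', j, hr', hj, hjr', hyeq⟩ := h (show y ∈ FSinf x from ⟨α, hαne, rfl⟩)
  have hrr' : r < r' := by
    by_contra hc
    push_neg at hc
    have : y ≤ r * 2 ^ (2 ^ r) :=
      hyeq ▸ le_trans (Nat.mul_le_mul_right _ hjr') (mono_bound hc)
    omega
  have hzmem : x 0 + y ∈ FSinf x := by
    refine ⟨insert 0 α, Finset.insert_nonempty _ _, ?_⟩
    rw [Finset.sum_insert h0α]
  obtain ⟨r'', k, hr'', hk, hkr'', hzeq⟩ := h hzmem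
  have hx0lt : x 0 < 2 ^ (2 ^ (r + 1)) := by
    have h1 : i * 2 ^ (2 ^ r) < 2 ^ (2 ^ r) * 2 ^ (2 ^ r) := by
      have : r < 2 ^ (2 ^ r) :=
        lt_of_lt_of_le (Nat.lt_two_pow_self (n := r)) (Nat.pow_le_pow_right (by norm_num) (Nat.le_of_lt (Nat.lt_two_pow_self (n := r))))
      have h2 : i < 2 ^ (2 ^ r) := lt_of_le_of_lt hir this
      exact Nat.mul_lt_mul_of_lt_of_le h2 (le_refl _) (Nat.pow_pos (by norm_num))
    rw [hx0]
    calc i * 2 ^ (2 ^ r) < 2 ^ (2 ^ r) * 2 ^ (2 ^ r) := h1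
      _ = 2 ^ (2 ^ r + 2 ^ r) := (pow_add 2 _ _).symm
      _ = 2 ^ (2 ^ (r + 1)) := by ring_nf
  rcases le_or_gt r'' r with hle | hgt
  · have : x 0 + y ≤ r * 2 ^ (2 ^ r) :=
      hzeq ▸ le_trans (Nat.mul_le_mul_right _ hkr'') (mono_bound hle)
    omega
  · have hd1 : 2 ^ (2 ^ (r + 1)) ∣ x 0 + y := by
      rw [hzeq]
      exact Dvd.dvd.mul_left (pow_dvd_pow 2 (Nat.pow_le_pow_right (by norm_num) hgt)) k
    have hd2 : 2 ^ (2 ^ (r + 1)) ∣ y := by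
      rw [hyeq]
      exact Dvd.dvd.mul_left (pow_dvd_pow 2 (Nat.pow_le_pow_right (by norm_num) hrr')) j
    have hd3 : 2 ^ (2 ^ (r + 1)) ∣ x 0 := by
      have := Nat.dvd_sub hd1 hd2
      simpa using this
    exact absurd (Nat.le_of_dvd (hx 0) hd3) (not_le.mpr hx0lt)

theorem example_ipstar_not_iprstar :
    (∀ r : ℕ, FSfin (fun _ : Fin r => 2 ^ (2 ^ r)) ⊆
      {m : ℕ | ∃ r i : ℕ, 1 ≤ r ∧ 1 ≤ i ∧ i ≤ r ∧ m = i * 2 ^ (2 ^ r)}) ∧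
    (∀ r : ℕ, 1 ≤ r → ¬ IsIPrStar r
      (Set.univ \ {m : ℕ | ∃ r i : ℕ, 1 ≤ r ∧ 1 ≤ i ∧ i ≤ r ∧ m = i * 2 ^ (2 ^ r)})) ∧
    (∀ x : ℕ → ℕ, (∀ n, 0 < x n) →
      ¬ (FSinf x ⊆ {m : ℕ | ∃ r i : ℕ, 1 ≤ r ∧ 1 ≤ i ∧ i ≤ r ∧ m = i * 2 ^ (2 ^ r)})) ∧
    (∀ x : ℕ → ℕ, (∀ n, 0 < x n) →
      ((Set.univ \ {m : ℕ | ∃ r i : ℕ, 1 ≤ r ∧ 1 ≤ i ∧ i ≤ r ∧ m = i * 2 ^ (2 ^ r)}) ∩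
        FSinf x).Nonempty) := by
  refine ⟨part1, ?_, part3, ?_⟩
  · intro r hr hstar
    obtain ⟨m, hm1, hm2⟩ := hstar _ ⟨fun _ : Fin r => 2 ^ (2 ^ r), Set.Subset.refl _⟩
    exact hm1.2 (part1 r hm2)
  · intro x hx
    obtain ⟨m, hmFS, hmA⟩ := Set.not_subset.mp (part3 x hx · )
    exact ⟨m, ⟨trivial, hmA⟩, hmFS⟩
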